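/- Let $f\in\mathbb{L}^\infty(\mathbb{R}^{2d})$ and let $P_t$ be the kinetic semigroup. Then for all $0<s\le t\le 1$: $\|P_t f - P_s \Gamma_{t-s} f\|_\infty \le C\big(\frac{t-s}{s}\wedge 1\big)\,\|f\|_\infty$, with $C$ depending only on $d$. -/

import Mathlib

open MeasureTheory Real

noncomputable section

/-- The kinetic Gaussian kernel `g_t` on `ℝ^d × ℝ^d`. -/
def gker (d : ℕ) (t : ℝ)
    (z : EuclideanSpace ℝ (Fin d) × EuclideanSpace ℝ (Fin d)) : ℝ :=
  (Real.pi * t ^ 4 / 3) ^ (-(d : ℝ) / 2) *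
    Real.exp (-(3 * ‖z.1‖ ^ 2 + ‖(3 : ℝ) • z.1 - (2 * t) • z.2‖ ^ 2) / (2 * t ^ 3))

/-- The shear operator `Γ_t f(x,v) = f(x + t v, v)`. -/
def Gam {d : ℕ} (t : ℝ)
    (f : EuclideanSpace ℝ (Fin d) × EuclideanSpace ℝ (Fin d) → ℝ) :
    EuclideanSpace ℝ (Fin d) × EuclideanSpace ℝ (Fin d) → ℝ :=
  fun z => f (z.1 + t • z.2, z.2)

/-- The kinetic semigroup in convolution form: `P_t f = (Γ_t g_t) * (Γ_t f)`. -/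
def Pker (d : ℕ) (t : ℝ)
    (f : EuclideanSpace ℝ (Fin d) × EuclideanSpace ℝ (Fin d) → ℝ)
    (z : EuclideanSpace ℝ (Fin d) × EuclideanSpace ℝ (Fin d)) : ℝ :=
  ∫ y, Gam t (gker d t) y * Gam t f (z - y)

namespace PkerProofAux

variable {d : ℕ}

local notation "E" => EuclideanSpace ℝ (Fin d)

/-! ### Gaussian integrals -/

lemma integrable_gauss {b : ℝ} (hb : 0 < b) :
    Integrable (fun v : E => Real.exp (-b * ‖v‖^2)) := by
  have h := (GaussianFourier.integrable_cexp_neg_mul_sq_norm_add (V := E)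
    (b := (b:ℂ)) (by simpa using hb) 0 0).re
  refine h.congr (Filter.Eventually.of_forall fun v => ?_)
  simp only [zero_mul, add_zero]
  rw [show (-(b:ℂ) * (‖v‖:ℂ)^2) = ((-b * ‖v‖^2 : ℝ) : ℂ) by push_cast; ring]
  exact Complex.exp_ofReal_re _

lemma integral_gauss {b : ℝ} (hb : 0 < b) :
    ∫ v : E, Real.exp (-b * ‖v‖^2) = (π / b) ^ ((d:ℝ)/2) := by
  rw [GaussianFourier.integral_rexp_neg_mul_sq_norm hb]
  simp [finrank_euclideanSpace_fin]

lemma integrable_gauss2 {α β : ℝ} (hα : 0 < α) (hβ : 0 < β) :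
    Integrable (fun z : E × E => Real.exp (-(α * ‖z.1‖^2 + β * ‖z.2‖^2))) := by
  have h := (integrable_gauss (d := d) hα).mul_prod (integrable_gauss (d := d) hβ)
  rw [← Measure.volume_eq_prod] at h
  refine h.congr (Filter.Eventually.of_forall fun z => ?_)
  show rexp _ * rexp _ = rexp _
  rw [← Real.exp_add]; ring_nf

lemma integral_gauss2 {α β : ℝ} (hα : 0 < α) (hβ : 0 < β) :
    ∫ z : E × E, Real.exp (-(α * ‖z.1‖^2 + β * ‖z.2‖^2))
      = ((π/α) * (π/β)) ^ ((d:ℝ)/2) := by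
  have : ∫ z : E × E, Real.exp (-(α * ‖z.1‖^2 + β * ‖z.2‖^2))
      = ∫ z : E × E, Real.exp (-α * ‖z.1‖^2) * Real.exp (-β * ‖z.2‖^2) := by
    congr 1; funext z; rw [← Real.exp_add]; ring_nf
  rw [this, Measure.volume_eq_prod,
    integral_prod_mul (f := fun x : E => rexp (-α * ‖x‖^2)) (g := fun x : E => rexp (-β * ‖x‖^2)),
    integral_gauss hα, integral_gauss hβ, ← Real.mul_rpow (by positivity) (by positivity)]

/-! ### The exponent of the sheared kernel -/

/-- exponent of the sheared kernel -/
def qf {d : ℕ} (r : ℝ) (z : EuclideanSpace ℝ (Fin d) × EuclideanSpace ℝ (Fin d)) : ℝ :=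
  (6 * ‖z.1‖^2 + 6 * r * (inner ℝ z.1 z.2 : ℝ) + 2 * r^2 * ‖z.2‖^2) / r^3

lemma Gam_gker_eq {r : ℝ} (hr : 0 < r) (z : E × E) :
    Gam r (gker d r) z = (π * r ^ 4 / 3) ^ (-(d:ℝ)/2) * Real.exp (-(qf r z)) := by
  obtain ⟨x, v⟩ := z
  simp only [Gam, gker, qf]
  congr 2
  have hvec : (3:ℝ) • (x + r • v) - (2*r) • v = (3:ℝ) • x + r • v := by
    module
  rw [hvec]
  have h1 : ‖x + r • v‖^2 = ‖x‖^2 + 2*r*(inner ℝ x v : ℝ) + r^2*‖v‖^2 := by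
    rw [@norm_add_sq_real, real_inner_smul_right, norm_smul]
    simp [mul_pow, sq_abs]; ring
  have h2 : ‖(3:ℝ) • x + r • v‖^2
      = 9*‖x‖^2 + 6*r*(inner ℝ x v : ℝ) + r^2*‖v‖^2 := by
    rw [@norm_add_sq_real, real_inner_smul_right, real_inner_smul_left, norm_smul, norm_smul]
    simp [mul_pow, sq_abs, abs_of_nonneg]
    ring
  rw [h1, h2]
  field_simp
  ring

lemma qf_lower {r : ℝ} (hr : 0 < r) (z : E × E) :
    (‖z.1‖^2 + r^2 * ‖z.2‖^2) / (3 * r^3) ≤ qf r z := by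
  have hip : -(‖z.1‖ * ‖z.2‖) ≤ (inner ℝ z.1 z.2 : ℝ) :=
    neg_le_of_abs_le (abs_real_inner_le_norm _ _)
  rw [qf, div_le_div_iff₀ (by positivity) (by positivity)]
  have h6r : (0:ℝ) ≤ 6 * r := by positivity
  have := mul_le_mul_of_nonneg_left hip h6r
  nlinarith [sq_nonneg (17 * ‖z.1‖ - 9 * r * ‖z.2‖), sq_nonneg (r * ‖z.2‖), hr.le,
    mul_pos (pow_pos hr 3) hr]

lemma qf_lower' {s r : ℝ} (hs : 0 < s) (h1 : s ≤ r) (h2 : r ≤ 2*s) (z : E × E) :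
    (‖z.1‖^2 + s^2 * ‖z.2‖^2) / (24 * s^3) ≤ qf r z := by
  have hr : 0 < r := hs.trans_le h1
  refine le_trans ?_ (qf_lower hr z)
  apply div_le_div₀ (by positivity)
  · have : s^2 ≤ r^2 := by nlinarith
    nlinarith [sq_nonneg ‖z.2‖]
  · positivity
  · nlinarith [pow_le_pow_left₀ hr.le h2 3]

set_option maxHeartbeats 1000000 in
private lemma qf_diff_core (a b ip s t : ℝ) (ha0 : 0 ≤ a) (hb0 : 0 ≤ b)
    (hip : |ip| ≤ a*b) (hs : 0 < s) (hst : s ≤ t) :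
    |(6*a^2 + 6*t*ip + 2*t^2*b^2)/t^3 - (6*a^2 + 6*s*ip + 2*s^2*b^2)/s^3|
      ≤ 24*((t-s)/s)*((a^2 + s^2*b^2)/s^3) := by
  have ht : 0 < t := hs.trans_le hst
  have hu : 0 ≤ t - s := sub_nonneg.2 hst
  have hexp : (6*a^2 + 6*t*ip + 2*t^2*b^2)/t^3 - (6*a^2 + 6*s*ip + 2*s^2*b^2)/s^3
      = 6*a^2*(1/t^3 - 1/s^3) + 6*ip*(1/t^2 - 1/s^2) + 2*b^2*(1/t - 1/s) := by
    field_simp; ring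
  have h1 : 1/s^3 - 1/t^3 ≤ 3*(t-s)/s^4 := by
    rw [div_sub_div _ _ (by positivity) (by positivity),
      div_le_div_iff₀ (by positivity) (by positivity)]
    nlinarith [mul_nonneg (mul_nonneg (pow_nonneg hs.le 3) (mul_nonneg hs.le hs.le)) (sq_nonneg (t-s)),
      mul_nonneg (mul_nonneg (pow_nonneg hs.le 3) (mul_nonneg hs.le hu)) (sq_nonneg (t-s)),
      mul_nonneg (pow_nonneg hs.le 3) (sq_nonneg ((t-s)^2))]
  have h2 : 1/s^2 - 1/t^2 ≤ 2*(t-s)/s^3 := by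
    rw [div_sub_div _ _ (by positivity) (by positivity),
      div_le_div_iff₀ (by positivity) (by positivity)]
    nlinarith [mul_nonneg ht.le (sq_nonneg (t-s)), mul_nonneg hs.le (sq_nonneg (t-s))]
  have h3 : 1/s - 1/t ≤ (t-s)/s^2 := by
    rw [div_sub_div _ _ (by positivity) (by positivity),
      div_le_div_iff₀ (by positivity) (by positivity)]
    nlinarith [mul_nonneg hs.le (sq_nonneg (t-s))]
  have h1' : 0 ≤ 1/s^3 - 1/t^3 := by rw [sub_nonneg]; gcongr
  have h2' : 0 ≤ 1/s^2 - 1/t^2 := by rw [sub_nonneg]; gcongr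
  have h3' : 0 ≤ 1/s - 1/t := by rw [sub_nonneg]; gcongr
  have e1 : |6*a^2*(1/t^3 - 1/s^3)| = 6*a^2*(1/s^3 - 1/t^3) := by
    rw [show 6*a^2*(1/t^3 - 1/s^3) = -(6*a^2*(1/s^3 - 1/t^3)) by ring, abs_neg,
      abs_of_nonneg (mul_nonneg (by positivity) h1')]
  have e2 : |6*ip*(1/t^2 - 1/s^2)| ≤ 6*(a*b)*(1/s^2 - 1/t^2) := by
    rw [show 6*ip*(1/t^2 - 1/s^2) = -(6*ip*(1/s^2 - 1/t^2)) by ring, abs_neg, abs_mul,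
      abs_of_nonneg h2', show |6*ip| = 6*|ip| by rw [abs_mul]; norm_num]
    exact mul_le_mul_of_nonneg_right (by linarith) h2'
  have e3 : |2*b^2*(1/t - 1/s)| = 2*b^2*(1/s - 1/t) := by
    rw [show 2*b^2*(1/t - 1/s) = -(2*b^2*(1/s - 1/t)) by ring, abs_neg,
      abs_of_nonneg (mul_nonneg (by positivity) h3')]
  have habs : |(6*a^2 + 6*t*ip + 2*t^2*b^2)/t^3 - (6*a^2 + 6*s*ip + 2*s^2*b^2)/s^3|
      ≤ 6*a^2*(1/s^3 - 1/t^3) + 6*(a*b)*(1/s^2 - 1/t^2) + 2*b^2*(1/s - 1/t) := by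
    rw [hexp]
    calc |6*a^2*(1/t^3 - 1/s^3) + 6*ip*(1/t^2 - 1/s^2) + 2*b^2*(1/t - 1/s)|
        ≤ |6*a^2*(1/t^3 - 1/s^3) + 6*ip*(1/t^2 - 1/s^2)| + |2*b^2*(1/t - 1/s)| := abs_add_le _ _
      _ ≤ |6*a^2*(1/t^3 - 1/s^3)| + |6*ip*(1/t^2 - 1/s^2)| + |2*b^2*(1/t - 1/s)| := by
          have := abs_add_le (6*a^2*(1/t^3 - 1/s^3)) (6*ip*(1/t^2 - 1/s^2)); linarith
      _ ≤ 6*a^2*(1/s^3 - 1/t^3) + 6*(a*b)*(1/s^2 - 1/t^2) + 2*b^2*(1/s - 1/t) := by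
          rw [e1, e3]; linarith
  have b1 : 6*a^2*(1/s^3 - 1/t^3) ≤ 6*a^2*(3*(t-s)/s^4) :=
    mul_le_mul_of_nonneg_left h1 (by positivity)
  have b2 : 6*(a*b)*(1/s^2 - 1/t^2) ≤ 6*(a*b)*(2*(t-s)/s^3) :=
    mul_le_mul_of_nonneg_left h2 (by positivity)
  have b3 : 2*b^2*(1/s - 1/t) ≤ 2*b^2*((t-s)/s^2) :=
    mul_le_mul_of_nonneg_left h3 (by positivity)
  have key : 18*a^2 + 12*(a*b)*s + 2*b^2*s^2 ≤ 24*(a^2 + s^2*b^2) := by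
    nlinarith [sq_nonneg (a - s*b)]
  have e : 6*a^2*(3*(t-s)/s^4) + 6*(a*b)*(2*(t-s)/s^3) + 2*b^2*((t-s)/s^2)
      = (18*a^2 + 12*(a*b)*s + 2*b^2*s^2) * ((t-s)/s^4) := by field_simp; ring
  have e' : 24*((t-s)/s)*((a^2 + s^2*b^2)/s^3) = (24*(a^2 + s^2*b^2)) * ((t-s)/s^4) := by
    field_simp
  have final : 6*a^2*(3*(t-s)/s^4) + 6*(a*b)*(2*(t-s)/s^3) + 2*b^2*((t-s)/s^2)
      ≤ 24*((t-s)/s)*((a^2 + s^2*b^2)/s^3) := by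
    rw [e, e']
    exact mul_le_mul_of_nonneg_right key (by positivity)
  linarith

lemma qf_diff {s t : ℝ} (hs : 0 < s) (hst : s ≤ t) (z : E × E) :
    |qf t z - qf s z| ≤ 24 * ((t-s)/s) * ((‖z.1‖^2 + s^2 * ‖z.2‖^2) / s^3) := by
  rw [qf, qf]
  exact qf_diff_core ‖z.1‖ ‖z.2‖ _ s t (norm_nonneg _) (norm_nonneg _)
    (abs_real_inner_le_norm _ _) hs hst

/-! ### Elementary real lemmas -/

lemma abs_exp_neg_sub {a b Q : ℝ} (hQa : Q ≤ a) (hQb : Q ≤ b) :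
    |Real.exp (-a) - Real.exp (-b)| ≤ |a - b| * Real.exp (-Q) := by
  rcases le_total a b with h | h
  · rw [abs_of_nonneg (by simpa using Real.exp_le_exp.2 (neg_le_neg h))]
    have e1 : Real.exp (-b) = Real.exp (-a) * Real.exp (-(b-a)) := by
      rw [← Real.exp_add]; ring_nf
    have e2 : 1 - Real.exp (-(b-a)) ≤ b - a := by
      have := Real.add_one_le_exp (-(b-a)); linarith
    have e3 : Real.exp (-a) ≤ Real.exp (-Q) := Real.exp_le_exp.2 (by linarith)
    calc Real.exp (-a) - Real.exp (-b) = Real.exp (-a) * (1 - Real.exp (-(b-a))) := by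
          rw [e1]; ring
      _ ≤ Real.exp (-Q) * (b - a) := by
          apply mul_le_mul e3 e2 ?_ (Real.exp_nonneg _)
          simp only [sub_nonneg]
          exact Real.exp_le_one_iff.2 (by linarith)
      _ ≤ |a - b| * Real.exp (-Q) := by
          rw [abs_sub_comm, abs_of_nonneg (by linarith)]
          exact le_of_eq (by ring)
  · rw [abs_of_nonpos (by simpa using Real.exp_le_exp.2 (neg_le_neg h)), neg_sub]
    have e1 : Real.exp (-a) = Real.exp (-b) * Real.exp (-(a-b)) := by
      rw [← Real.exp_add]; ring_nf
    have e2 : 1 - Real.exp (-(a-b)) ≤ a - b := by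
      have := Real.add_one_le_exp (-(a-b)); linarith
    have e3 : Real.exp (-b) ≤ Real.exp (-Q) := Real.exp_le_exp.2 (by linarith)
    calc Real.exp (-b) - Real.exp (-a) = Real.exp (-b) * (1 - Real.exp (-(a-b))) := by
          rw [e1]; ring
      _ ≤ Real.exp (-Q) * (a - b) := by
          apply mul_le_mul e3 e2 ?_ (Real.exp_nonneg _)
          simp only [sub_nonneg]
          exact Real.exp_le_one_iff.2 (by linarith)
      _ ≤ |a - b| * Real.exp (-Q) := by
          rw [abs_of_nonneg (by linarith)]
          exact le_of_eq (by ring)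

lemma mul_exp_neg_le {Q : ℝ} (hQ : 0 ≤ Q) : Q * Real.exp (-Q) ≤ Real.exp (-(Q/2)) := by
  have h4 : Q ≤ Real.exp (Q/2) := by
    have h := Real.add_one_le_exp (Q/4)
    have : Real.exp (Q/2) = Real.exp (Q/4) * Real.exp (Q/4) := by
      rw [← Real.exp_add]; ring_nf
    nlinarith [Real.exp_pos (Q/4), sq_nonneg (1 - Q/4)]
  calc Q * Real.exp (-Q) ≤ Real.exp (Q/2) * Real.exp (-Q) :=
        mul_le_mul_of_nonneg_right h4 (Real.exp_nonneg _)
    _ = Real.exp (-(Q/2)) := by rw [← Real.exp_add]; ring_nf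

/-! ### The normalizing constant -/

lemma cst_pos {r : ℝ} (hr : 0 < r) (d : ℕ) : 0 < (π * r ^ 4 / 3) ^ (-(d:ℝ)/2) :=
  Real.rpow_pos_of_pos (by positivity) _

lemma cst_antitone {s t : ℝ} (hs : 0 < s) (hst : s ≤ t) (d : ℕ) :
    (π * t ^ 4 / 3) ^ (-(d:ℝ)/2) ≤ (π * s ^ 4 / 3) ^ (-(d:ℝ)/2) := by
  have ht : 0 < t := hs.trans_le hst
  apply Real.rpow_le_rpow_of_nonpos (by positivity) (by gcongr) ?_
  rw [div_nonpos_iff]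
  right; constructor
  · simp
  · norm_num

lemma cst_diff {s t : ℝ} (hs : 0 < s) (hst : s ≤ t) (d : ℕ) :
    (π * s ^ 4 / 3) ^ (-(d:ℝ)/2) - (π * t ^ 4 / 3) ^ (-(d:ℝ)/2)
      ≤ 2*d*((t-s)/s) * (π * s ^ 4 / 3) ^ (-(d:ℝ)/2) := by
  have ht : 0 < t := hs.trans_le hst
  -- rewrite c_t = c_s * (s/t)^(2d)
  have key : (π * t ^ 4 / 3) ^ (-(d:ℝ)/2)
      = (π * s ^ 4 / 3) ^ (-(d:ℝ)/2) * (s/t)^(2*d) := by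
    rw [show π * t ^ 4 / 3 = (π * s ^ 4 / 3) * (t/s)^4 by field_simp,
      Real.mul_rpow (by positivity) (by positivity), ← Real.rpow_natCast ((t/s)) 4,
      show (s/t) = (t/s)⁻¹ by rw [inv_div],
      ← Real.rpow_neg_one (t/s), ← Real.rpow_natCast ((t/s) ^ ((-1:ℝ))) (2*d),
      ← Real.rpow_mul (by positivity), ← Real.rpow_mul (by positivity)]
    push_cast
    ring_nf
  rw [key]
  have hst' : 0 < s/t := by positivity
  have hb : 1 - (s/t)^(2*d) ≤ 2*d*((t-s)/s) := by
    have hb1 : 1 + ((2*d : ℕ) : ℝ) * ((s/t) - 1) ≤ (1 + ((s/t) - 1))^(2*d) :=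
      one_add_mul_le_pow (by linarith) (2*d)
    have hb2 : (1 + ((s/t) - 1))^(2*d) = (s/t)^(2*d) := by ring_nf
    have hd0 : (0:ℝ) ≤ (d:ℝ) := Nat.cast_nonneg d
    have h1 : 1 - s/t = (t-s)/t := by field_simp
    have h2 : (t-s)/t ≤ (t-s)/s := by
      exact div_le_div_of_nonneg_left (by linarith) hs hst
    push_cast at hb1
    calc 1 - (s/t)^(2*d) ≤ 2*d*(1 - s/t) := by rw [← hb2]; linarith
      _ = 2*d*((t-s)/t) := by rw [h1]
      _ ≤ 2*d*((t-s)/s) := by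
          apply mul_le_mul_of_nonneg_left h2 (by positivity)
  have hcs : 0 < (π * s ^ 4 / 3) ^ (-(d:ℝ)/2) := cst_pos hs d
  have hpow : 0 ≤ (s/t)^(2*d) := by positivity
  calc (π * s ^ 4 / 3) ^ (-(d:ℝ)/2) - (π * s ^ 4 / 3) ^ (-(d:ℝ)/2) * (s/t)^(2*d)
      = (π * s ^ 4 / 3) ^ (-(d:ℝ)/2) * (1 - (s/t)^(2*d)) := by ring
    _ ≤ (π * s ^ 4 / 3) ^ (-(d:ℝ)/2) * (2*d*((t-s)/s)) :=
        mul_le_mul_of_nonneg_left hb hcs.le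
    _ = 2*d*((t-s)/s) * (π * s ^ 4 / 3) ^ (-(d:ℝ)/2) := by ring

lemma rpow_combine {A B : ℝ} (hA : 0 < A) (hB : 0 < B) (e : ℝ) :
    A^(-e) * B^e = (B/A)^e := by
  rw [Real.rpow_neg hA.le, Real.div_rpow hB.le hA.le, div_eq_mul_inv, mul_comm]

/-! ### Kernel basics -/

lemma gam_gker_continuous (r : ℝ) : Continuous (Gam r (gker d r)) := by
  unfold Gam gker
  fun_prop

lemma gam_gker_nonneg (r : ℝ) (z : E × E) : 0 ≤ Gam r (gker d r) z := by
  unfold Gam gker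
  positivity

lemma gam_gker_le {r : ℝ} (hr : 0 < r) (z : E × E) :
    Gam r (gker d r) z
      ≤ (π * r ^ 4 / 3) ^ (-(d:ℝ)/2)
        * Real.exp (-(1/(3*r^3) * ‖z.1‖^2 + 1/(3*r) * ‖z.2‖^2)) := by
  rw [Gam_gker_eq hr z]
  apply mul_le_mul_of_nonneg_left ?_ (cst_pos hr d).le
  apply Real.exp_le_exp.2
  rw [neg_le_neg_iff]
  refine le_trans (le_of_eq ?_) (qf_lower hr z)
  field_simp

lemma gam_gker_integrable {r : ℝ} (hr : 0 < r) :
    Integrable (Gam r (gker d r)) := by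
  apply Integrable.mono'
    (((integrable_gauss2 (d := d) (α := 1/(3*r^3)) (β := 1/(3*r)) (by positivity)
      (by positivity))).const_mul ((π * r ^ 4 / 3) ^ (-(d:ℝ)/2)))
    (gam_gker_continuous r).aestronglyMeasurable
  refine Filter.Eventually.of_forall fun z => ?_
  rw [Real.norm_eq_abs, abs_of_nonneg (gam_gker_nonneg r z)]
  exact gam_gker_le hr z

lemma gam_gker_mass {r : ℝ} (hr : 0 < r) :
    ∫ z : E × E, Gam r (gker d r) z ≤ (27*π) ^ ((d:ℝ)/2) := by
  have hmaj := ((integrable_gauss2 (d := d) (α := 1/(3*r^3)) (β := 1/(3*r)) (by positivity)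
    (by positivity))).const_mul ((π * r ^ 4 / 3) ^ (-(d:ℝ)/2))
  have h1 : ∫ z : E × E, Gam r (gker d r) z
      ≤ ∫ z : E × E, (π * r ^ 4 / 3) ^ (-(d:ℝ)/2)
          * Real.exp (-(1/(3*r^3) * ‖z.1‖^2 + 1/(3*r) * ‖z.2‖^2)) :=
    integral_mono (gam_gker_integrable hr) hmaj (fun z => gam_gker_le hr z)
  refine h1.trans (le_of_eq ?_)
  rw [integral_const_mul, integral_gauss2 (by positivity) (by positivity)]
  rw [show (π/(1/(3*r^3))) * (π/(1/(3*r))) = 9*π^2*r^4 by field_simp; ring, neg_div,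
    rpow_combine (div_pos (mul_pos pi_pos (pow_pos hr 4)) (by norm_num))
      (mul_pos (mul_pos (by norm_num : (0:ℝ) < 9) (pow_pos pi_pos 2)) (pow_pos hr 4))]
  congr 1
  field_simp
  ring

/-! ### Pointwise bound on the kernel difference in the regime `t ≤ 2s` -/

lemma ptwise_bound {s t : ℝ} (hs : 0 < s) (hst : s ≤ t) (ht2 : t ≤ 2*s) (z : E × E) :
    |Gam t (gker d t) z - Gam s (gker d s) z|
      ≤ (2*(d:ℝ) + 576) * ((t-s)/s) *
        ((π * s ^ 4 / 3) ^ (-(d:ℝ)/2)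
          * Real.exp (-(1/(48*s^3) * ‖z.1‖^2 + 1/(48*s) * ‖z.2‖^2))) := by
  have ht : 0 < t := hs.trans_le hst
  have hθ : 0 ≤ (t-s)/s := div_nonneg (sub_nonneg.2 hst) hs.le
  set Q : ℝ := (‖z.1‖^2 + s^2 * ‖z.2‖^2) / (24 * s^3) with hQdef
  have hQ0 : 0 ≤ Q := by positivity
  have hQt : Q ≤ qf t z := qf_lower' hs hst ht2 z
  have hQs : Q ≤ qf s z := qf_lower' hs le_rfl (by linarith) z
  have hexpQ : Real.exp (-(1/(48*s^3) * ‖z.1‖^2 + 1/(48*s) * ‖z.2‖^2))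
      = Real.exp (-(Q/2)) := by
    congr 1
    rw [hQdef]
    field_simp
    ring
  rw [hexpQ, Gam_gker_eq ht z, Gam_gker_eq hs z]
  set ct := (π * t ^ 4 / 3) ^ (-(d:ℝ)/2) with hct
  set cs := (π * s ^ 4 / 3) ^ (-(d:ℝ)/2) with hcs
  have hcs0 : 0 < cs := cst_pos hs d
  have hct0 : 0 < ct := cst_pos ht d
  have hsplit : ct * Real.exp (-(qf t z)) - cs * Real.exp (-(qf s z))
      = (ct - cs) * Real.exp (-(qf t z))
        + cs * (Real.exp (-(qf t z)) - Real.exp (-(qf s z))) := by ring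
  have hterm1 : |(ct - cs) * Real.exp (-(qf t z))|
      ≤ (2*(d:ℝ)*((t-s)/s)) * cs * Real.exp (-(Q/2)) := by
    rw [abs_mul, abs_of_nonneg (Real.exp_nonneg _)]
    have h1 : |ct - cs| ≤ 2*(d:ℝ)*((t-s)/s) * cs := by
      rw [abs_of_nonpos (by linarith [cst_antitone hs hst d]), neg_sub]
      exact cst_diff hs hst d
    have h2 : Real.exp (-(qf t z)) ≤ Real.exp (-(Q/2)) :=
      Real.exp_le_exp.2 (by linarith)
    calc |ct - cs| * Real.exp (-(qf t z))
        ≤ (2*(d:ℝ)*((t-s)/s) * cs) * Real.exp (-(Q/2)) :=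
          mul_le_mul h1 h2 (Real.exp_nonneg _) (by positivity)
      _ = (2*(d:ℝ)*((t-s)/s)) * cs * Real.exp (-(Q/2)) := by ring
  have hterm2 : |cs * (Real.exp (-(qf t z)) - Real.exp (-(qf s z)))|
      ≤ (576*((t-s)/s)) * cs * Real.exp (-(Q/2)) := by
    rw [abs_mul, abs_of_nonneg hcs0.le]
    have hdq : |qf t z - qf s z| ≤ 576 * ((t-s)/s) * Q := by
      refine (qf_diff hs hst z).trans (le_of_eq ?_)
      rw [hQdef]
      field_simp
      ring
    have h1 : |Real.exp (-(qf t z)) - Real.exp (-(qf s z))|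
        ≤ (576*((t-s)/s)*Q) * Real.exp (-Q) := by
      refine le_trans (abs_exp_neg_sub hQt hQs) ?_
      exact mul_le_mul_of_nonneg_right hdq (Real.exp_nonneg _)
    have h2 : (576*((t-s)/s)*Q) * Real.exp (-Q)
        ≤ (576*((t-s)/s)) * Real.exp (-(Q/2)) := by
      rw [show (576*((t-s)/s)*Q) * Real.exp (-Q) = (576*((t-s)/s)) * (Q * Real.exp (-Q)) by ring]
      exact mul_le_mul_of_nonneg_left (mul_exp_neg_le hQ0) (by positivity)
    calc cs * |Real.exp (-(qf t z)) - Real.exp (-(qf s z))|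
        ≤ cs * ((576*((t-s)/s)) * Real.exp (-(Q/2))) :=
          mul_le_mul_of_nonneg_left (h1.trans h2) hcs0.le
      _ = (576*((t-s)/s)) * cs * Real.exp (-(Q/2)) := by ring
  calc |ct * Real.exp (-(qf t z)) - cs * Real.exp (-(qf s z))|
      ≤ |(ct - cs) * Real.exp (-(qf t z))|
        + |cs * (Real.exp (-(qf t z)) - Real.exp (-(qf s z)))| := by
        rw [hsplit]; exact abs_add_le _ _
    _ ≤ (2*(d:ℝ)*((t-s)/s)) * cs * Real.exp (-(Q/2))
        + (576*((t-s)/s)) * cs * Real.exp (-(Q/2)) := add_le_add hterm1 hterm2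
    _ = (2*(d:ℝ) + 576) * ((t-s)/s) * (cs * Real.exp (-(Q/2))) := by ring

end PkerProofAux

open PkerProofAux

/-- Sup-norm continuity of the kinetic semigroup with shear correction:
`‖P_t f - P_s Γ_{t-s} f‖_∞ ≤ C ((t-s)/s ∧ 1) ‖f‖_∞` for `0 < s ≤ t ≤ 1`. -/
theorem Pker_shear_time_continuity (d : ℕ) :
    ∃ C : ℝ, 0 < C ∧
      ∀ (f : EuclideanSpace ℝ (Fin d) × EuclideanSpace ℝ (Fin d) → ℝ),
        Measurable f → ∀ M : ℝ, (∀ z, |f z| ≤ M) →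
        ∀ s t : ℝ, 0 < s → s ≤ t → t ≤ 1 →
        ∀ z, |Pker d t f z - Pker d s (Gam (t - s) f) z|
          ≤ C * (min ((t - s) / s) 1) * M := by
  classical
  set K : ℝ := (6912*π) ^ ((d:ℝ)/2) with hK
  have hKpos : 0 < K := Real.rpow_pos_of_pos (by positivity) _
  refine ⟨(2*(d:ℝ) + 578) * K, by positivity, ?_⟩
  intro f hf M hM s t hs hst ht1 z
  have ht : 0 < t := hs.trans_le hst
  have hM0 : 0 ≤ M := le_trans (abs_nonneg _) (hM 0)
  -- the bounded factor
  set F : EuclideanSpace ℝ (Fin d) × EuclideanSpace ℝ (Fin d) → ℝ := Gam t f with hF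
  have hFmeas : Measurable F := by
    have hc : Continuous fun w : EuclideanSpace ℝ (Fin d) × EuclideanSpace ℝ (Fin d) =>
        (w.1 + t • w.2, w.2) := by fun_prop
    exact hf.comp hc.measurable
  have hFbd : ∀ y, |F y| ≤ M := fun y => hM _
  -- rewrite `P_s (Γ_{t-s} f)` using the semigroup property of the shear
  have hGam : Gam s (Gam (t - s) f) = F := by
    funext w
    simp only [Gam, hF]
    congr 2
    rw [add_assoc, ← add_smul]
    norm_num
  have hPs : Pker d s (Gam (t - s) f) z = ∫ y, Gam s (gker d s) y * F (z - y) := by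
    rw [Pker, hGam]
  -- integrability of both convolution integrands
  have hint : ∀ r : ℝ, 0 < r →
      Integrable (fun y => Gam r (gker d r) y * F (z - y)) := by
    intro r hr
    have h := Integrable.bdd_mul (f := fun y => F (z - y)) (c := M) (gam_gker_integrable hr)
      ((hFmeas.comp (measurable_const.sub measurable_id)).aestronglyMeasurable)
      (Filter.Eventually.of_forall fun y => by
        rw [Real.norm_eq_abs]; exact hFbd _)
    exact h.congr (Filter.Eventually.of_forall fun y => mul_comm _ _)
  have hsub : Pker d t f z - Pker d s (Gam (t - s) f) z
      = ∫ y, (Gam t (gker d t) y * F (z - y) - Gam s (gker d s) y * F (z - y)) := by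
    rw [hPs, Pker, ← integral_sub (hint t ht) (hint s hs)]
  rcases le_or_gt (t - s) s with hsmall | hlarge
  · -- small increment: `t ≤ 2 s`
    have hmin : min ((t - s) / s) 1 = (t - s) / s :=
      min_eq_left ((div_le_one hs).2 hsmall)
    have ht2 : t ≤ 2 * s := by linarith
    have hθ : 0 ≤ (t - s) / s := div_nonneg (sub_nonneg.2 hst) hs.le
    have hcs : 0 < (π * s ^ 4 / 3) ^ (-(d:ℝ)/2) := cst_pos hs d
    have hα : (0:ℝ) < 1/(48*s^3) := by positivity
    have hβ : (0:ℝ) < 1/(48*s) := by positivity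
    have hbint : Integrable (fun y : EuclideanSpace ℝ (Fin d) × EuclideanSpace ℝ (Fin d) =>
        ((2*(d:ℝ) + 576) * ((t-s)/s) * ((π * s ^ 4 / 3) ^ (-(d:ℝ)/2)) * M)
          * Real.exp (-(1/(48*s^3) * ‖y.1‖^2 + 1/(48*s) * ‖y.2‖^2))) :=
      (integrable_gauss2 hα hβ).const_mul _
    have habs : |Pker d t f z - Pker d s (Gam (t - s) f) z|
        ≤ ∫ y : EuclideanSpace ℝ (Fin d) × EuclideanSpace ℝ (Fin d),
            ((2*(d:ℝ) + 576) * ((t-s)/s) * ((π * s ^ 4 / 3) ^ (-(d:ℝ)/2)) * M)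
              * Real.exp (-(1/(48*s^3) * ‖y.1‖^2 + 1/(48*s) * ‖y.2‖^2)) := by
      rw [hsub, ← Real.norm_eq_abs]
      apply norm_integral_le_of_norm_le hbint
      refine Filter.Eventually.of_forall fun y => ?_
      rw [Real.norm_eq_abs, show Gam t (gker d t) y * F (z - y) - Gam s (gker d s) y * F (z - y)
        = (Gam t (gker d t) y - Gam s (gker d s) y) * F (z - y) by ring, abs_mul]
      have hp := ptwise_bound hs hst ht2 y
      have hq := hFbd (z - y)
      calc |Gam t (gker d t) y - Gam s (gker d s) y| * |F (z - y)|
          ≤ ((2*(d:ℝ) + 576) * ((t-s)/s) *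
              ((π * s ^ 4 / 3) ^ (-(d:ℝ)/2)
                * Real.exp (-(1/(48*s^3) * ‖y.1‖^2 + 1/(48*s) * ‖y.2‖^2)))) * M :=
            mul_le_mul hp hq (abs_nonneg _)
              (by positivity)
        _ = ((2*(d:ℝ) + 576) * ((t-s)/s) * ((π * s ^ 4 / 3) ^ (-(d:ℝ)/2)) * M)
              * Real.exp (-(1/(48*s^3) * ‖y.1‖^2 + 1/(48*s) * ‖y.2‖^2)) := by ring
    have hK' : (π * s ^ 4 / 3) ^ (-(d:ℝ)/2)
        * ((π/(1/(48*s^3))) * (π/(1/(48*s)))) ^ ((d:ℝ)/2) = K := by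
      rw [show (π/(1/(48*s^3))) * (π/(1/(48*s))) = 2304*π^2*s^4 by field_simp; ring, neg_div,
        rpow_combine (div_pos (mul_pos pi_pos (pow_pos hs 4)) (by norm_num))
          (mul_pos (mul_pos (by norm_num : (0:ℝ) < 2304) (pow_pos pi_pos 2)) (pow_pos hs 4)),
        hK]
      congr 1
      field_simp
      ring
    have hval : ∫ y : EuclideanSpace ℝ (Fin d) × EuclideanSpace ℝ (Fin d),
        ((2*(d:ℝ) + 576) * ((t-s)/s) * ((π * s ^ 4 / 3) ^ (-(d:ℝ)/2)) * M)
          * Real.exp (-(1/(48*s^3) * ‖y.1‖^2 + 1/(48*s) * ‖y.2‖^2))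
        = (2*(d:ℝ) + 576) * ((t-s)/s) * M * K := by
      rw [integral_const_mul, integral_gauss2 hα hβ, ← hK']
      ring
    rw [hval] at habs
    refine habs.trans ?_
    rw [hmin]
    have : (2*(d:ℝ) + 576) ≤ (2*(d:ℝ) + 578) := by norm_num
    have hd0 : (0:ℝ) ≤ 2*(d:ℝ) + 576 := by positivity
    nlinarith [mul_nonneg (mul_nonneg hθ hM0) hKpos.le]
  · -- large increment: use the trivial mass bound
    have hmin : min ((t - s) / s) 1 = 1 :=
      min_eq_right (by rw [le_div_iff₀ hs]; linarith)
    have hbint : Integrable (fun y : EuclideanSpace ℝ (Fin d) × EuclideanSpace ℝ (Fin d) =>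
        (Gam t (gker d t) y + Gam s (gker d s) y) * M) :=
      ((gam_gker_integrable ht).add (gam_gker_integrable hs)).mul_const M
    have habs : |Pker d t f z - Pker d s (Gam (t - s) f) z|
        ≤ ∫ y : EuclideanSpace ℝ (Fin d) × EuclideanSpace ℝ (Fin d),
            (Gam t (gker d t) y + Gam s (gker d s) y) * M := by
      rw [hsub, ← Real.norm_eq_abs]
      apply norm_integral_le_of_norm_le hbint
      refine Filter.Eventually.of_forall fun y => ?_
      rw [Real.norm_eq_abs, show Gam t (gker d t) y * F (z - y) - Gam s (gker d s) y * F (z - y)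
        = (Gam t (gker d t) y - Gam s (gker d s) y) * F (z - y) by ring, abs_mul]
      have h1 : |Gam t (gker d t) y - Gam s (gker d s) y|
          ≤ Gam t (gker d t) y + Gam s (gker d s) y := by
        refine (abs_sub _ _).trans ?_
        rw [abs_of_nonneg (gam_gker_nonneg t y), abs_of_nonneg (gam_gker_nonneg s y)]
      exact mul_le_mul h1 (hFbd _) (abs_nonneg _)
        (add_nonneg (gam_gker_nonneg t y) (gam_gker_nonneg s y))
    have hval : ∫ y : EuclideanSpace ℝ (Fin d) × EuclideanSpace ℝ (Fin d),
        (Gam t (gker d t) y + Gam s (gker d s) y) * M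
        = ((∫ y, Gam t (gker d t) y) + ∫ y, Gam s (gker d s) y) * M := by
      rw [integral_mul_const, integral_add (gam_gker_integrable ht) (gam_gker_integrable hs)]
    have hmass : ((∫ y, Gam t (gker d t) y) + ∫ y, Gam s (gker d s) y) * M ≤ 2 * K * M := by
      have h27 : ((27:ℝ)*π) ^ ((d:ℝ)/2) ≤ K := by
        rw [hK]
        apply Real.rpow_le_rpow (by positivity) (by nlinarith [pi_pos]) (by positivity)
      have h1 := gam_gker_mass (d := d) ht
      have h2 := gam_gker_mass (d := d) hs
      have : (∫ y, Gam t (gker d t) y) + ∫ y, Gam s (gker d s) y ≤ 2 * K := by linarith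
      exact mul_le_mul_of_nonneg_right this hM0
    rw [hval] at habs
    refine (habs.trans hmass).trans ?_
    rw [hmin]
    have hd0 : (0:ℝ) ≤ (d:ℝ) := Nat.cast_nonneg d
    nlinarith [mul_nonneg hKpos.le hM0, mul_nonneg (mul_nonneg hd0 hKpos.le) hM0]
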